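/- Let S be a possibly disconnected surface with k connected components, total Euler genus g, and b boundary components in total, and consider sequences of essential cutting operations (cutting along non-contractible simple closed curves). Define the potential φ(S') = 2·(total Euler genus of S') − (number of connected components of S'). Then φ strictly decreases at each essential cutting operation, φ(S) = 2g − k, and for every surface S' obtainable from S by essential cutting operations, φ(S') ≥ −(k + g + b). Consequently, every sequence of essential cutting operations starting from S has length at most 3g + b. -/
import Mathlib


/-- A connected component of a possibly disconnected surface with boundary, recorded
(following the classification of surfaces) by its Euler genus and its number of
boundary components. -/
structure SurfComp where
  genus : ℕ
  boundary : ℕ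
deriving DecidableEq

/-- A possibly disconnected surface with boundary, up to homeomorphism. -/
abbrev BSurf := Multiset SurfComp

/-- Total Euler genus. -/
def totGenus (S : BSurf) : ℕ := (S.map SurfComp.genus).sum

/-- Total number of boundary components. -/
def totBoundary (S : BSurf) : ℕ := (S.map SurfComp.boundary).sum

/-- Number of connected components. -/
def nComp (S : BSurf) : ℕ := Multiset.card S

/-- An essential cutting operation (cutting along a non-contractible simple closed
curve in the interior and attaching disks to the new boundary circles): either it
reduces the Euler genus of one component by 1 or 2, keeping the number of components,
or it splits one component into two components whose genera sum to that of the original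
and whose boundary components are partitioned among them, each new component having
positive genus or containing a boundary component. -/
def EssCut (S S' : BSurf) : Prop :=
  (∃ C ∈ S, ∃ d : ℕ, (d = 1 ∨ d = 2) ∧ d ≤ C.genus ∧
      S' = (S.erase C) + {⟨C.genus - d, C.boundary⟩})
  ∨ (∃ C ∈ S, ∃ C₁ C₂ : SurfComp, C₁.genus + C₂.genus = C.genus ∧
      C₁.boundary + C₂.boundary = C.boundary ∧
      (0 < C₁.genus ∨ 0 < C₁.boundary) ∧ (0 < C₂.genus ∨ 0 < C₂.boundary) ∧
      S' = (S.erase C) + {C₁, C₂})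

/-- The potential `φ(S) = 2·(total genus) − (number of components)`. -/
def potential (S : BSurf) : ℤ := 2 * (totGenus S : ℤ) - (nComp S : ℤ)

/-- Number of sphere components (genus 0, no boundary). -/
def nSph (S : BSurf) : ℕ :=
  Multiset.card (S.filter (fun C => C.genus = 0 ∧ C.boundary = 0))

@[simp] lemma totGenus_cons (C : SurfComp) (S : BSurf) :
    totGenus (C ::ₘ S) = C.genus + totGenus S := by simp [totGenus]

@[simp] lemma totBoundary_cons (C : SurfComp) (S : BSurf) :
    totBoundary (C ::ₘ S) = C.boundary + totBoundary S := by simp [totBoundary]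

@[simp] lemma nComp_cons (C : SurfComp) (S : BSurf) :
    nComp (C ::ₘ S) = nComp S + 1 := by simp [nComp]

@[simp] lemma nSph_cons (C : SurfComp) (S : BSurf) :
    nSph (C ::ₘ S) = (if C.genus = 0 ∧ C.boundary = 0 then 1 else 0) + nSph S := by
  simp only [nSph, Multiset.filter_cons]
  split_ifs <;> simp [Nat.add_comm]

@[simp] lemma totGenus_add (A B : BSurf) :
    totGenus (A + B) = totGenus A + totGenus B := by simp [totGenus]

@[simp] lemma totBoundary_add (A B : BSurf) :
    totBoundary (A + B) = totBoundary A + totBoundary B := by simp [totBoundary]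

@[simp] lemma nComp_add (A B : BSurf) :
    nComp (A + B) = nComp A + nComp B := by simp [nComp]

@[simp] lemma nSph_add (A B : BSurf) :
    nSph (A + B) = nSph A + nSph B := by simp [nSph]

@[simp] lemma totGenus_zero : totGenus 0 = 0 := rfl
@[simp] lemma totBoundary_zero : totBoundary 0 = 0 := rfl
@[simp] lemma nComp_zero : nComp 0 = 0 := rfl
@[simp] lemma nSph_zero : nSph 0 = 0 := rfl

lemma nSph_le_nComp (S : BSurf) : nSph S ≤ nComp S :=
  Multiset.card_le_card (Multiset.filter_le _ _)

lemma nComp_le (S : BSurf) : nComp S ≤ nSph S + totGenus S + totBoundary S := by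
  induction S using Multiset.induction with
  | empty => simp
  | cons C S ih =>
    simp only [nComp_cons, nSph_cons, totGenus_cons, totBoundary_cons]
    split_ifs with h <;> omega

lemma essCut_facts {T T' : BSurf} (h : EssCut T T') :
    potential T' < potential T ∧ totBoundary T' = totBoundary T ∧
    nSph T' + totGenus T' ≤ nSph T + totGenus T := by
  rcases h with ⟨C, hC, d, hd, hdg, rfl⟩ | ⟨C, hC, C₁, C₂, hg, hbd, h1, h2, rfl⟩
  · have hT : C ::ₘ T.erase C = T := Multiset.cons_erase hC
    have hsing : ({⟨C.genus - d, C.boundary⟩} : BSurf)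
        = (⟨C.genus - d, C.boundary⟩ : SurfComp) ::ₘ 0 := rfl
    rw [← hT, hsing]
    refine ⟨?_, ?_, ?_⟩
    · simp only [potential, totGenus_add, totGenus_cons, nComp_add, nComp_cons,
        totGenus_zero, nComp_zero, Multiset.erase_cons_head]
      push_cast
      omega
    · simp only [totBoundary_add, totBoundary_cons, totBoundary_zero,
        Multiset.erase_cons_head, hsing]
      omega
    · simp only [nSph_add, nSph_cons, totGenus_add, totGenus_cons, nSph_zero,
        totGenus_zero, Multiset.erase_cons_head]
      split_ifs <;> omega
  · have hT : C ::ₘ T.erase C = T := Multiset.cons_erase hC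
    have hpair : ({C₁, C₂} : BSurf) = C₁ ::ₘ C₂ ::ₘ 0 := rfl
    rw [← hT, hpair]
    have hn1 : ¬(C₁.genus = 0 ∧ C₁.boundary = 0) := by omega
    have hn2 : ¬(C₂.genus = 0 ∧ C₂.boundary = 0) := by omega
    refine ⟨?_, ?_, ?_⟩
    · simp only [potential, totGenus_add, totGenus_cons, nComp_add, nComp_cons,
        totGenus_zero, nComp_zero, Multiset.erase_cons_head]
      push_cast
      omega
    · simp only [totBoundary_add, totBoundary_cons, totBoundary_zero,
        Multiset.erase_cons_head]
      omega
    · simp only [nSph_add, nSph_cons, totGenus_add, totGenus_cons, nSph_zero,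
        totGenus_zero, Multiset.erase_cons_head, if_neg hn1, if_neg hn2]
      split_ifs <;> omega

/-- the potential `φ = 2·(total genus) − (number of components)` strictly
decreases at each essential cutting operation, `φ(S) = 2g − k`, every surface `S'`
obtainable from `S` by essential cutting operations satisfies `φ(S') ≥ −(k + g + b)`,
and consequently every sequence of essential cutting operations starting from `S` has
length at most `3g + b`. -/
theorem essCut_potential (S : BSurf) (k g b : ℕ)
    (hk : nComp S = k) (hg : totGenus S = g) (hb : totBoundary S = b) :
    (∀ T T' : BSurf, EssCut T T' → potential T' < potential T) ∧
    (potential S = 2 * (g : ℤ) - (k : ℤ)) ∧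
    (∀ T : BSurf, Relation.ReflTransGen EssCut S T →
      -((k : ℤ) + (g : ℤ) + (b : ℤ)) ≤ potential T) ∧
    (∀ (m : ℕ) (L : ℕ → BSurf), L 0 = S →
      (∀ i < m, EssCut (L i) (L (i + 1))) → m ≤ 3 * g + b) := by
  have part1 : ∀ T T' : BSurf, EssCut T T' → potential T' < potential T :=
    fun T T' h => (essCut_facts h).1
  have inv : ∀ T : BSurf, Relation.ReflTransGen EssCut S T →
      totBoundary T = b ∧ nSph T + totGenus T ≤ k + g := by
    intro T h
    induction h with
    | refl =>
      have := nSph_le_nComp S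
      exact ⟨hb, by omega⟩
    | tail _ hbc ih =>
      obtain ⟨_, h2, h3⟩ := essCut_facts hbc
      exact ⟨by omega, by omega⟩
  have part3 : ∀ T : BSurf, Relation.ReflTransGen EssCut S T →
      -((k : ℤ) + (g : ℤ) + (b : ℤ)) ≤ potential T := by
    intro T h
    obtain ⟨hB, hI⟩ := inv T h
    have hle := nComp_le T
    simp only [potential]
    omega
  refine ⟨part1, by simp [potential, hg, hk], part3, ?_⟩
  intro m L h0 hstep
  have reach : ∀ i ≤ m, Relation.ReflTransGen EssCut S (L i) := by
    intro i hi
    induction i with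
    | zero => rw [h0]
    | succ n ih =>
      exact Relation.ReflTransGen.tail (ih (by omega)) (hstep n (by omega))
  have dec : ∀ i ≤ m, potential (L i) ≤ potential (L 0) - i := by
    intro i hi
    induction i with
    | zero => simp
    | succ n ih =>
      have h1 := part1 _ _ (hstep n (by omega))
      have h2 := ih (by omega)
      push_cast
      omega
  have hA := dec m le_rfl
  have hB := part3 (L m) (reach m le_rfl)
  rw [h0] at hA
  simp only [potential, hg, hk] at hA hB ⊢
  omega
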